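/- Suppose β* ≠ 0. For every u with 1 ≤ u ≤ r and every λ satisfying 0 < λ < tr(Σ_ε) / (σ_max(β* β*') · σ_max(Φ_u^{-1} D_u²)), one has R_E(u, λ) < R_N(u, u) = tr(Σ_ε)·tr(V_u D_u^{-2} V_u' Σ_x), where σ_max(·) denotes the largest eigenvalue. -/

import Mathlib

open Matrix
open scoped Kronecker

/-- The vectorization `vec(β)` of a `p × q` matrix, indexed to match `I_q ⊗ A`
(the index `(k, i)` with `k ∈ Fin q`, `i ∈ Fin p` corresponds to entry `β i k`). -/
def vecM {p q : ℕ} (β : Matrix (Fin p) (Fin q) ℝ) : Fin q × Fin p → ℝ :=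
  fun ki => β ki.2 ki.1

/-- EgReg reducible prediction risk
`R_E(d, λ) = tr(Σ_ε)·tr(V_d D_d⁻² Φ_d² (Φ_d + λ I_d)⁻² V_d' Σ_x)
  + λ²·vec(β*)'(I_q ⊗ V_d (Φ_d + λ I_d)⁻¹ V_d' Σ_x V_d (Φ_d + λ I_d)⁻¹ V_d') vec(β*)`. -/
noncomputable def RE {p q d : ℕ}
    (Vd : Matrix (Fin p) (Fin d) ℝ) (Dd Φd : Matrix (Fin d) (Fin d) ℝ)
    (Sx : Matrix (Fin p) (Fin p) ℝ) (Se : Matrix (Fin q) (Fin q) ℝ)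
    (β : Matrix (Fin p) (Fin q) ℝ) (lam : ℝ) : ℝ :=
  Se.trace * (Vd * (Dd ^ 2)⁻¹ * Φd ^ 2 * ((Φd + lam • 1) ^ 2)⁻¹ * Vdᵀ * Sx).trace
  + lam ^ 2 * vecM β ⬝ᵥ (((1 : Matrix (Fin q) (Fin q) ℝ) ⊗ₖ
      (Vd * (Φd + lam • 1)⁻¹ * Vdᵀ * Sx * Vd * (Φd + lam • 1)⁻¹ * Vdᵀ)).mulVec (vecM β))

/-- NIECE reducible prediction risk
`R_N(u, d) = tr(Σ_ε)·tr(V_u D_u⁻² V_u' Σ_x)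
  + vec(β*)'(I_q ⊗ (V_u V_u' − V_d V_d') Σ_x (V_u V_u' − V_d V_d')) vec(β*)`. -/
noncomputable def RN {p q u d : ℕ}
    (Vu : Matrix (Fin p) (Fin u) ℝ) (Du : Matrix (Fin u) (Fin u) ℝ)
    (Vd : Matrix (Fin p) (Fin d) ℝ)
    (Sx : Matrix (Fin p) (Fin p) ℝ) (Se : Matrix (Fin q) (Fin q) ℝ)
    (β : Matrix (Fin p) (Fin q) ℝ) : ℝ :=
  Se.trace * (Vu * (Du ^ 2)⁻¹ * Vuᵀ * Sx).trace
  + vecM β ⬝ᵥ (((1 : Matrix (Fin q) (Fin q) ℝ) ⊗ₖ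
      ((Vu * Vuᵀ - Vd * Vdᵀ) * Sx * (Vu * Vuᵀ - Vd * Vdᵀ))).mulVec (vecM β))

/-- The largest eigenvalue of a square matrix. -/
noncomputable def maxEig {m : ℕ} (A : Matrix (Fin m) (Fin m) ℝ) : ℝ :=
  sSup {t : ℝ | ∃ w : Fin m → ℝ, w ≠ 0 ∧ A.mulVec w = t • w}

section Aux
variable {m p q u : ℕ}

lemma trace_diagonal_mul (g : Fin m → ℝ) (S : Matrix (Fin m) (Fin m) ℝ) :
    (Matrix.diagonal g * S).trace = ∑ j, g j * S j j := by
  simp [Matrix.trace, Matrix.diag, Matrix.diagonal_mul]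

lemma psd_trace_nonneg {M : Matrix (Fin m) (Fin m) ℝ} (hM : M.PosSemidef) : 0 ≤ M.trace := by
  have h : ∀ i, 0 ≤ M i i := fun i => by
    have := hM.dotProduct_mulVec_nonneg (Pi.single i 1)
    simpa [Matrix.mulVec_single, dotProduct, Pi.single_apply] using this
  exact Finset.sum_nonneg fun i _ => h i

lemma psd_trace_mul_nonneg {P Q : Matrix (Fin m) (Fin m) ℝ} (hP : P.PosSemidef)
    (hQ : Q.PosSemidef) : 0 ≤ (P * Q).trace := by
  obtain ⟨B, hB⟩ : ∃ B : Matrix (Fin m) (Fin m) ℝ, P = Bᴴ * B := by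
    open scoped MatrixOrder in
    obtain ⟨B, hB⟩ := CStarAlgebra.nonneg_iff_eq_star_mul_self.mp hP.nonneg
    exact ⟨B, hB⟩
  have h : (P * Q).trace = (B * Q * Bᴴ).trace := by
    rw [Matrix.trace_mul_cycle, hB, Matrix.mul_assoc]
  rw [h]
  exact psd_trace_nonneg (hQ.mul_mul_conjTranspose_same B)

lemma inv_diag (v : Fin m → ℝ) (hv : ∀ j, v j ≠ 0) :
    (Matrix.diagonal v)⁻¹ = Matrix.diagonal (fun j => (v j)⁻¹) := by
  apply Matrix.inv_eq_right_inv
  rw [Matrix.diagonal_mul_diagonal]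
  convert Matrix.diagonal_one with j
  exact mul_inv_cancel₀ (hv j)

lemma le_maxEig_diagonal (d : Fin m → ℝ) (j : Fin m) : d j ≤ maxEig (Matrix.diagonal d) := by
  apply le_csSup
  · refine ((Set.finite_range d).bddAbove).mono ?_
    rintro t ⟨w, hw, hww⟩
    obtain ⟨i, hi⟩ := Function.ne_iff.mp hw
    have h := congrFun hww i
    simp only [Matrix.mulVec_diagonal, Pi.smul_apply, smul_eq_mul] at h
    exact ⟨i, mul_right_cancel₀ hi (by linarith [h] )⟩
  · refine ⟨Pi.single j 1, fun h => by simpa using congrFun h j, ?_⟩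
    funext i
    by_cases h : i = j <;> simp [Matrix.mulVec_diagonal, Pi.single_apply, h]


section Spec
variable {m : ℕ}

lemma smul_one_sub_psd {B : Matrix (Fin m) (Fin m) ℝ} (hB : B.IsHermitian) {c : ℝ}
    (hc : ∀ i, hB.eigenvalues i ≤ c) :
    (c • (1 : Matrix (Fin m) (Fin m) ℝ) - B).PosSemidef := by
  have hU : (hB.eigenvectorUnitary : Matrix (Fin m) (Fin m) ℝ)
      * star (hB.eigenvectorUnitary : Matrix (Fin m) (Fin m) ℝ) = 1 :=
    Matrix.mem_unitaryGroup_iff.mp hB.eigenvectorUnitary.2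
  have key : c • (1 : Matrix (Fin m) (Fin m) ℝ) - B
      = (hB.eigenvectorUnitary : Matrix (Fin m) (Fin m) ℝ)
        * Matrix.diagonal (fun i => c - hB.eigenvalues i)
        * (hB.eigenvectorUnitary : Matrix (Fin m) (Fin m) ℝ)ᴴ := by
    have hd : Matrix.diagonal (fun i => c - hB.eigenvalues i)
        = c • (1 : Matrix (Fin m) (Fin m) ℝ) - Matrix.diagonal hB.eigenvalues := by
      rw [Matrix.smul_one_eq_diagonal, ← Matrix.diagonal_sub]
    conv_lhs => rw [hB.spectral_theorem, ← hU]
    rw [hd]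
    simp only [Matrix.sub_mul, Matrix.mul_sub, Matrix.smul_mul, Matrix.mul_smul, Matrix.one_mul,
      Matrix.mul_one]
    congr 1 <;>
      simp [Matrix.star_eq_conjTranspose, RCLike.ofReal_real_eq_id, Function.comp]
  rw [key]
  exact (Matrix.posSemidef_diagonal_iff.mpr (fun i => sub_nonneg.mpr (hc i))).mul_mul_conjTranspose_same _

lemma maxEig_spec (hm : 0 < m) {B : Matrix (Fin m) (Fin m) ℝ} (hB : B.PosSemidef) :
    (maxEig B • (1 : Matrix (Fin m) (Fin m) ℝ) - B).PosSemidef ∧ 0 ≤ maxEig B := by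
  have : Nonempty (Fin m) := ⟨⟨0, hm⟩⟩
  have hH := hB.isHermitian
  set c := Finset.univ.sup' Finset.univ_nonempty hH.eigenvalues with hcdef
  have hc : ∀ i, hH.eigenvalues i ≤ c := fun i => Finset.le_sup' _ (Finset.mem_univ i)
  have hpsd := smul_one_sub_psd hH hc
  have hub : ∀ t ∈ {t : ℝ | ∃ w : Fin m → ℝ, w ≠ 0 ∧ B.mulVec w = t • w}, t ≤ c := by
    rintro t ⟨w, hw, hww⟩
    have hq := hpsd.dotProduct_mulVec_nonneg w
    have hsw : star w = w := by simp
    rw [hsw, Matrix.sub_mulVec, Matrix.smul_mulVec, Matrix.one_mulVec, hww,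
      dotProduct_sub, dotProduct_smul, dotProduct_smul] at hq
    have hwpos : 0 < w ⬝ᵥ w := by
      rcases (dotProduct_self_star_pos_iff (v := w)).mpr hw with h
      simpa [hsw] using h
    simp only [smul_eq_mul, sub_nonneg] at hq
    exact le_of_mul_le_mul_right (by linarith) hwpos
  obtain ⟨i0, hi0⟩ := Finset.exists_mem_eq_sup' (Finset.univ_nonempty (α := Fin m)) hH.eigenvalues
  have hmem : c ∈ {t : ℝ | ∃ w : Fin m → ℝ, w ≠ 0 ∧ B.mulVec w = t • w} := by
    refine ⟨⇑(hH.eigenvectorBasis i0), ?_, ?_⟩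
    · have := hH.eigenvectorBasis.orthonormal.ne_zero i0
      intro h0
      apply this
      ext j
      exact congrFun h0 j
    · rw [show c = hH.eigenvalues i0 from hcdef.trans hi0.2]
      exact hH.mulVec_eigenvectorBasis i0
  have hEq : maxEig B = c := by
    apply le_antisymm
    · exact csSup_le ⟨c, hmem⟩ hub
    · exact le_csSup ⟨c, hub⟩ hmem
  rw [hEq]
  exact ⟨hpsd, le_trans (hB.eigenvalues_nonneg i0) (hc i0)⟩

end Spec

section Kron
variable {p q r u : ℕ}

lemma kron_quad (β : Matrix (Fin p) (Fin q) ℝ) (M : Matrix (Fin p) (Fin p) ℝ) :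
    vecM β ⬝ᵥ (((1 : Matrix (Fin q) (Fin q) ℝ) ⊗ₖ M).mulVec (vecM β)) = (βᵀ * M * β).trace := by
  simp only [dotProduct, Matrix.mulVec, Matrix.trace, Matrix.diag, Matrix.mul_apply, vecM,
    Matrix.kroneckerMap_apply, Fintype.sum_prod_type, Matrix.one_apply, Matrix.transpose_apply]
  refine Finset.sum_congr rfl fun k _ => ?_
  calc ∑ i, β i k * ∑ l : Fin q, ∑ j, (if k = l then (1:ℝ) else 0) * M i j * β j l
      = ∑ i, ∑ j, β i k * (M i j * β j k) := by
        refine Finset.sum_congr rfl fun i _ => ?_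
        rw [Finset.sum_comm, Finset.mul_sum]
        refine Finset.sum_congr rfl fun j _ => ?_
        simp [Finset.mul_sum, mul_ite, ite_mul, Finset.sum_ite_eq']
    _ = ∑ j, ∑ i, β i k * (M i j * β j k) := Finset.sum_comm
    _ = ∑ j, (∑ i, β i k * M i j) * β j k := by
        refine Finset.sum_congr rfl fun j _ => ?_
        rw [Finset.sum_mul]
        exact Finset.sum_congr rfl fun i _ => by ring


lemma submatrix_orthonormal {V : Matrix (Fin p) (Fin r) ℝ} (hV : Vᵀ * V = 1)
    {e : Fin u → Fin r} (he : Function.Injective e) :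
    (V.submatrix id e)ᵀ * (V.submatrix id e) = 1 := by
  ext i j
  have h := congrFun (congrFun hV (e i)) (e j)
  simp only [Matrix.mul_apply, Matrix.transpose_apply, Matrix.one_apply] at h ⊢
  simp only [Matrix.submatrix_apply, id_eq]
  rw [h]
  simp [he.eq_iff]

lemma quad_diag_pos {Sx : Matrix (Fin p) (Fin p) ℝ} (hSx : Sx.PosDef)
    {W : Matrix (Fin p) (Fin u) ℝ} (hW : Wᵀ * W = 1) (j : Fin u) :
    0 < (Wᵀ * Sx * W) j j := by
  have hcol : (fun i => W i j) ≠ 0 := by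
    intro h0
    have h1 := congrFun (congrFun hW j) j
    simp only [Matrix.mul_apply, Matrix.transpose_apply, Matrix.one_apply_eq] at h1
    rw [funext_iff] at h0
    simp only [Pi.zero_apply] at h0
    simp [h0] at h1
  have h := hSx.dotProduct_mulVec_pos hcol
  have hsw : star (fun i => W i j) = (fun i => W i j) := by simp
  rw [hsw] at h
  refine h.trans_eq (Eq.symm ?_)
  simp only [Matrix.mul_apply, Matrix.transpose_apply, dotProduct, Matrix.mulVec]
  calc ∑ x, (∑ y, W y j * Sx y x) * W x j
      = ∑ x, ∑ y, W y j * Sx y x * W x j := by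
        exact Finset.sum_congr rfl fun x _ => by rw [Finset.sum_mul]
    _ = ∑ y, ∑ x, W y j * Sx y x * W x j := Finset.sum_comm
    _ = ∑ y, W y j * ∑ x, Sx y x * W x j := by
        refine Finset.sum_congr rfl fun y _ => ?_
        rw [Finset.mul_sum]
        exact Finset.sum_congr rfl fun x _ => by ring

end Kron

lemma trace_WGW {p u : ℕ} (W : Matrix (Fin p) (Fin u) ℝ) (G : Matrix (Fin u) (Fin u) ℝ)
    (Sx : Matrix (Fin p) (Fin p) ℝ) :
    (W * G * Wᵀ * Sx).trace = (G * (Wᵀ * Sx * W)).trace := by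
  rw [Matrix.mul_assoc, Matrix.trace_mul_comm, ← Matrix.mul_assoc, Matrix.trace_mul_comm]

lemma key {p q u : ℕ} (hu : 0 < u) (hp : 0 < p)
    (W : Matrix (Fin p) (Fin u) ℝ) (hW : Wᵀ * W = 1)
    (s f : Fin u → ℝ) (hs : ∀ j, 0 < s j) (hf : ∀ j, 0 < f j)
    (Sx : Matrix (Fin p) (Fin p) ℝ) (hSx : Sx.PosDef)
    (Se : Matrix (Fin q) (Fin q) ℝ) (hSetr : 0 < Se.trace)
    (β : Matrix (Fin p) (Fin q) ℝ) (lam : ℝ) (hlam : 0 < lam)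
    (hbound : ∀ j, lam * (maxEig (β * βᵀ) * (s j ^ 2 / f j)) < Se.trace) :
    RE W (Matrix.diagonal s) (Matrix.diagonal f) Sx Se β lam
      < Se.trace * (W * ((Matrix.diagonal s) ^ 2)⁻¹ * Wᵀ * Sx).trace := by
  set c := maxEig (β * βᵀ) with hcdef
  have hBpsd : (β * βᵀ).PosSemidef := by
    have h := Matrix.posSemidef_self_mul_conjTranspose β
    rwa [Matrix.conjTranspose_eq_transpose_of_trivial] at h
  obtain ⟨hcpsd, hc0⟩ := maxEig_spec hp hBpsd
  -- notation
  set S := Wᵀ * Sx * W with hSdef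
  have hSjj : ∀ j, 0 < S j j := quad_diag_pos hSx hW
  have hfl : ∀ j, 0 < f j + lam := fun j => by linarith [hf j]
  -- diagonal rewrites
  have hD2 : ((Matrix.diagonal s : Matrix (Fin u) (Fin u) ℝ) ^ 2)⁻¹
      = Matrix.diagonal (fun j => (s j ^ 2)⁻¹) := by
    rw [Matrix.diagonal_pow,
      inv_diag (s ^ 2) (fun j => by have := hs j; simp only [Pi.pow_apply]; positivity)]
    rfl
  have hΦ2 : ((Matrix.diagonal f : Matrix (Fin u) (Fin u) ℝ) ^ 2)
      = Matrix.diagonal (fun j => f j ^ 2) := by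
    rw [Matrix.diagonal_pow]; rfl
  have hΦl : (Matrix.diagonal f + lam • (1 : Matrix (Fin u) (Fin u) ℝ))
      = Matrix.diagonal (fun j => f j + lam) := by
    rw [Matrix.smul_one_eq_diagonal, ← Matrix.diagonal_add]
  have hA : (Matrix.diagonal f + lam • (1 : Matrix (Fin u) (Fin u) ℝ))⁻¹
      = Matrix.diagonal (fun j => (f j + lam)⁻¹) := by
    rw [hΦl, inv_diag _ (fun j => (hfl j).ne')]
  have hA2 : ((Matrix.diagonal f + lam • (1 : Matrix (Fin u) (Fin u) ℝ)) ^ 2)⁻¹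
      = Matrix.diagonal (fun j => ((f j + lam) ^ 2)⁻¹) := by
    rw [hΦl, Matrix.diagonal_pow,
      inv_diag ((fun j => f j + lam) ^ 2) (fun j => by have := hfl j; simp only [Pi.pow_apply]; positivity)]
    rfl
  -- first trace term of RE
  have hT1 : (W * ((Matrix.diagonal s : Matrix (Fin u) (Fin u) ℝ) ^ 2)⁻¹ * (Matrix.diagonal f) ^ 2
        * (((Matrix.diagonal f) + lam • 1) ^ 2)⁻¹ * Wᵀ * Sx).trace
      = ∑ j, ((s j ^ 2)⁻¹ * f j ^ 2 * ((f j + lam) ^ 2)⁻¹) * S j j := by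
    rw [hD2, hΦ2, hA2]
    have e1 : W * Matrix.diagonal (fun j => (s j ^ 2)⁻¹) * Matrix.diagonal (fun j => f j ^ 2)
        * Matrix.diagonal (fun j => ((f j + lam) ^ 2)⁻¹)
        = W * Matrix.diagonal (fun j => (s j ^ 2)⁻¹ * f j ^ 2 * ((f j + lam) ^ 2)⁻¹) := by
      rw [Matrix.mul_assoc W, Matrix.diagonal_mul_diagonal, Matrix.mul_assoc W,
        Matrix.diagonal_mul_diagonal]
    rw [e1, trace_WGW, trace_diagonal_mul]
  -- RN trace term
  have hT2 : (W * ((Matrix.diagonal s : Matrix (Fin u) (Fin u) ℝ) ^ 2)⁻¹ * Wᵀ * Sx).trace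
      = ∑ j, (s j ^ 2)⁻¹ * S j j := by
    rw [hD2, trace_WGW, trace_diagonal_mul]
  -- quadratic term
  set N := W * (Matrix.diagonal fun j => (f j + lam)⁻¹) * Wᵀ with hNdef
  have hNsymm : Nᵀ = N := by
    rw [hNdef, Matrix.transpose_mul, Matrix.transpose_mul, Matrix.transpose_transpose,
      Matrix.diagonal_transpose, Matrix.mul_assoc]
  set M := N * Sx * N with hMdef
  have hMexpr : W * (Matrix.diagonal f + lam • 1)⁻¹ * Wᵀ * Sx * W * (Matrix.diagonal f + lam • 1)⁻¹ * Wᵀ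
      = M := by
    rw [hA, hMdef, hNdef]
    simp only [Matrix.mul_assoc]
  have hMpsd : M.PosSemidef := by
    have h := hSx.posSemidef.mul_mul_conjTranspose_same N
    rwa [Matrix.conjTranspose_eq_transpose_of_trivial, hNsymm] at h
  have hQ : vecM β ⬝ᵥ (((1 : Matrix (Fin q) (Fin q) ℝ) ⊗ₖ M).mulVec (vecM β))
      = ((β * βᵀ) * M).trace := by
    rw [kron_quad, Matrix.trace_mul_cycle]
  have htrM : M.trace = ∑ j, ((f j + lam)⁻¹ * (f j + lam)⁻¹) * S j j := by
    rw [hMdef, hNdef]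
    rw [Matrix.trace_mul_comm]
    simp only [Matrix.mul_assoc]
    rw [← Matrix.mul_assoc Wᵀ W, hW, Matrix.one_mul, Matrix.trace_mul_comm]
    simp only [Matrix.mul_assoc]
    rw [← Matrix.mul_assoc Wᵀ Sx W, ← Matrix.mul_assoc, Matrix.diagonal_mul_diagonal,
      trace_diagonal_mul]
  have hQle : ((β * βᵀ) * M).trace ≤ c * ∑ j, ((f j + lam)⁻¹ * (f j + lam)⁻¹) * S j j := by
    have h0 := psd_trace_mul_nonneg hcpsd hMpsd
    rw [Matrix.sub_mul, Matrix.trace_sub, Matrix.smul_mul, Matrix.trace_smul, Matrix.one_mul,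
      sub_nonneg, smul_eq_mul] at h0
    calc ((β * βᵀ) * M).trace ≤ c * M.trace := h0
      _ = c * ∑ j, ((f j + lam)⁻¹ * (f j + lam)⁻¹) * S j j := by rw [htrM]
  -- assemble
  rw [RE, hT1, hT2, hMexpr, hQ]
  have step : lam ^ 2 * ((β * βᵀ) * M).trace
      ≤ lam ^ 2 * (c * ∑ j, ((f j + lam)⁻¹ * (f j + lam)⁻¹) * S j j) :=
    mul_le_mul_of_nonneg_left hQle (by positivity)
  have main : Se.trace * ∑ j, ((s j ^ 2)⁻¹ * f j ^ 2 * ((f j + lam) ^ 2)⁻¹) * S j j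
      + lam ^ 2 * (c * ∑ j, ((f j + lam)⁻¹ * (f j + lam)⁻¹) * S j j)
      < Se.trace * ∑ j, (s j ^ 2)⁻¹ * S j j := by
    simp only [Finset.mul_sum, ← Finset.sum_add_distrib]
    apply Finset.sum_lt_sum_of_nonempty
    · exact Finset.univ_nonempty_iff.mpr ⟨⟨0, hu⟩⟩
    intro j _
    have hb := hbound j
    have h1 : lam * c * s j ^ 2 < Se.trace * f j := by
      have h2 : lam * (c * (s j ^ 2 / f j)) * f j < Se.trace * f j :=
        mul_lt_mul_of_pos_right hb (hf j)
      have e : lam * (c * (s j ^ 2 / f j)) * f j = lam * c * s j ^ 2 := by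
        have hd : s j ^ 2 / f j * f j = s j ^ 2 := div_mul_cancel₀ _ (hf j).ne'
        calc lam * (c * (s j ^ 2 / f j)) * f j = lam * c * (s j ^ 2 / f j * f j) := by ring
          _ = lam * c * s j ^ 2 := by rw [hd]
      rw [e] at h2
      exact h2
    have hcoeff : Se.trace * ((s j ^ 2)⁻¹ * f j ^ 2 * ((f j + lam) ^ 2)⁻¹)
        + lam ^ 2 * (c * ((f j + lam)⁻¹ * (f j + lam)⁻¹))
        < Se.trace * (s j ^ 2)⁻¹ := by
      have hsne : s j ≠ 0 := (hs j).ne'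
      have hfne : f j + lam ≠ 0 := (hfl j).ne'
      have eL : Se.trace * ((s j ^ 2)⁻¹ * f j ^ 2 * ((f j + lam) ^ 2)⁻¹)
          + lam ^ 2 * (c * ((f j + lam)⁻¹ * (f j + lam)⁻¹))
          = (Se.trace * f j ^ 2 + lam ^ 2 * c * s j ^ 2) / (s j ^ 2 * (f j + lam) ^ 2) := by
        field_simp <;> ring
      have eR : Se.trace * (s j ^ 2)⁻¹ = Se.trace / s j ^ 2 := (div_eq_mul_inv _ _).symm
      rw [eL, eR, div_lt_div_iff₀ (by positivity) (by positivity)]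
      have h3 : lam * c * s j ^ 2 * lam * s j ^ 2 < Se.trace * f j * lam * s j ^ 2 := by
        have := mul_lt_mul_of_pos_right (mul_lt_mul_of_pos_right h1 hlam) (by positivity : (0:ℝ) < s j ^ 2)
        exact this
      nlinarith [h3, mul_pos (mul_pos hSetr (mul_pos (hf j) hlam)) (pow_pos (hs j) 2),
        mul_pos (mul_pos hSetr (mul_pos hlam hlam)) (pow_pos (hs j) 2)]
    calc Se.trace * (((s j ^ 2)⁻¹ * f j ^ 2 * ((f j + lam) ^ 2)⁻¹) * S j j)
          + lam ^ 2 * (c * (((f j + lam)⁻¹ * (f j + lam)⁻¹) * S j j))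
        = (Se.trace * ((s j ^ 2)⁻¹ * f j ^ 2 * ((f j + lam) ^ 2)⁻¹)
            + lam ^ 2 * (c * ((f j + lam)⁻¹ * (f j + lam)⁻¹))) * S j j := by ring
      _ < (Se.trace * (s j ^ 2)⁻¹) * S j j := mul_lt_mul_of_pos_right hcoeff (hSjj j)
      _ = Se.trace * ((s j ^ 2)⁻¹ * S j j) := by ring
  calc Se.trace * ∑ j, ((s j ^ 2)⁻¹ * f j ^ 2 * ((f j + lam) ^ 2)⁻¹) * S j j
        + lam ^ 2 * ((β * βᵀ) * M).trace
      ≤ Se.trace * ∑ j, ((s j ^ 2)⁻¹ * f j ^ 2 * ((f j + lam) ^ 2)⁻¹) * S j j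
        + lam ^ 2 * (c * ∑ j, ((f j + lam)⁻¹ * (f j + lam)⁻¹) * S j j) := by linarith [step]
    _ < Se.trace * ∑ j, (s j ^ 2)⁻¹ * S j j := main


theorem egreg_risk_lt_niece_risk_for_small_lambda
    (n p q r : ℕ) (hr : 0 < r)
    (X : Matrix (Fin n) (Fin p) ℝ)
    (U : Matrix (Fin n) (Fin r) ℝ) (V : Matrix (Fin p) (Fin r) ℝ) (σ : Fin r → ℝ)
    (hrank : X.rank = r)
    (hSVD : X = U * Matrix.diagonal σ * Vᵀ)
    (hU : Uᵀ * U = 1) (hV : Vᵀ * V = 1)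
    (hσpos : ∀ j, 0 < σ j) (hσanti : Antitone σ)
    (π : Equiv.Perm (Fin r)) (φ : Fin r → ℝ)
    (hφpos : ∀ j, 0 < φ j) (hφanti : Antitone φ)
    (Sx : Matrix (Fin p) (Fin p) ℝ) (hSx : Sx.PosDef) (hSxsymm : Sx.IsSymm)
    (Se : Matrix (Fin q) (Fin q) ℝ) (hSe : Se.PosSemidef) (hSetr : 0 < Se.trace)
    (β : Matrix (Fin p) (Fin q) ℝ) (hβ : β ≠ 0) :
    ∀ u : ℕ, 1 ≤ u → ∀ hu : u ≤ r, ∀ lam : ℝ, 0 < lam →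
      lam < Se.trace / (maxEig (β * βᵀ) *
        maxEig ((Matrix.diagonal (fun j : Fin u => φ (Fin.castLE hu j)))⁻¹ *
          (Matrix.diagonal (fun j : Fin u => σ (π (Fin.castLE hu j)))) ^ 2)) →
      RE (V.submatrix id (fun j : Fin u => π (Fin.castLE hu j)))
         (Matrix.diagonal (fun j : Fin u => σ (π (Fin.castLE hu j))))
         (Matrix.diagonal (fun j : Fin u => φ (Fin.castLE hu j)))
         Sx Se β lam
      < RN (V.submatrix id (fun j : Fin u => π (Fin.castLE hu j)))
           (Matrix.diagonal (fun j : Fin u => σ (π (Fin.castLE hu j))))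
           (V.submatrix id (fun j : Fin u => π (Fin.castLE hu j)))
           Sx Se β
      ∧ RN (V.submatrix id (fun j : Fin u => π (Fin.castLE hu j)))
           (Matrix.diagonal (fun j : Fin u => σ (π (Fin.castLE hu j))))
           (V.submatrix id (fun j : Fin u => π (Fin.castLE hu j)))
           Sx Se β
        = Se.trace * ((V.submatrix id (fun j : Fin u => π (Fin.castLE hu j))) *
            ((Matrix.diagonal (fun j : Fin u => σ (π (Fin.castLE hu j)))) ^ 2)⁻¹ *
            (V.submatrix id (fun j : Fin u => π (Fin.castLE hu j)))ᵀ * Sx).trace := by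
  intro u hu1 hu lam hlam hlam2
  have hu0 : 0 < u := hu1
  have hp : 0 < p := by
    rcases Nat.eq_zero_or_pos p with h0 | h0
    · exfalso; apply hβ; ext i k; exact absurd i.isLt (by omega)
    · exact h0
  set e : Fin u → Fin r := fun j => π (Fin.castLE hu j) with hedef
  have he : Function.Injective e := fun a b h => Fin.castLE_injective hu (π.injective h)
  have hW : (V.submatrix id e)ᵀ * (V.submatrix id e) = 1 := submatrix_orthonormal hV he
  set s : Fin u → ℝ := fun j => σ (π (Fin.castLE hu j)) with hsdef
  set f : Fin u → ℝ := fun j => φ (Fin.castLE hu j) with hfdef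
  have hs : ∀ j, 0 < s j := fun j => hσpos _
  have hf : ∀ j, 0 < f j := fun j => hφpos _
  set d : Fin u → ℝ := fun j => (f j)⁻¹ * s j ^ 2 with hddef
  have hdm : (Matrix.diagonal f)⁻¹ * (Matrix.diagonal s) ^ 2 = Matrix.diagonal d := by
    rw [inv_diag f (fun j => (hf j).ne'), Matrix.diagonal_pow, Matrix.diagonal_mul_diagonal]
    rfl
  rw [hdm] at hlam2
  set c := maxEig (β * βᵀ) with hcdef
  set m2 := maxEig (Matrix.diagonal d) with hm2def
  have hd_le : ∀ j, d j ≤ m2 := le_maxEig_diagonal d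
  have hm2pos : 0 < m2 := by
    refine lt_of_lt_of_le ?_ (hd_le ⟨0, hu0⟩)
    have h1 := hf ⟨0, hu0⟩
    have h2 := hs ⟨0, hu0⟩
    positivity
  have hP : 0 < c * m2 := by
    rcases lt_trichotomy (c * m2) 0 with h | h | h
    · exact absurd (hlam.trans hlam2) (not_lt.mpr (le_of_lt (div_neg_of_pos_of_neg hSetr h)))
    · rw [h, div_zero] at hlam2
      exact absurd (hlam.trans hlam2) (lt_irrefl 0)
    · exact h
  have hcpos : 0 < c := by nlinarith
  have hlam_mul : lam * (c * m2) < Se.trace := (lt_div_iff₀ hP).mp hlam2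
  have hbound : ∀ j, lam * (c * (s j ^ 2 / f j)) < Se.trace := by
    intro j
    have h5 : s j ^ 2 / f j ≤ m2 := by
      rw [div_eq_inv_mul]
      exact hd_le j
    calc lam * (c * (s j ^ 2 / f j)) ≤ lam * (c * m2) :=
          mul_le_mul_of_nonneg_left (mul_le_mul_of_nonneg_left h5 hcpos.le) hlam.le
      _ < Se.trace := hlam_mul
  have hRN : RN (V.submatrix id e) (Matrix.diagonal s) (V.submatrix id e) Sx Se β
      = Se.trace * ((V.submatrix id e) * ((Matrix.diagonal s) ^ 2)⁻¹ * (V.submatrix id e)ᵀ * Sx).trace := by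
    simp [RN, sub_self, Matrix.zero_mul, Matrix.mul_zero, Matrix.kronecker_zero,
      Matrix.zero_mulVec, dotProduct_zero]
  refine ⟨?_, hRN⟩
  rw [hRN]
  exact key hu0 hp (V.submatrix id e) hW s f hs hf Sx hSx Se hSetr β lam hlam hbound
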